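/- Let L be a group, R a normal subgroup of L, and U a normal subgroup of L with U ≤ R and [R : U] finite. Let U^L denote the intersection of all finite-index subgroups of L that contain U. Then the commutator subgroup ⁅U^L, R⁆ is contained in U; that is, U^L acts trivially on R/U by conjugation. -/

import Mathlib

/-- The closure of a subgroup `U` in the profinite topology of `L`: the intersection of
all finite-index subgroups of `L` containing `U`. -/
def profClosure {L : Type*} [Group L] (U : Subgroup L) : Subgroup L :=
  ⨅ V ∈ {V : Subgroup L | V.FiniteIndex ∧ U ≤ V}, V

section Aux

variable {L : Type} [Group L] (R U : Subgroup L) [R.Normal] [U.Normal]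

/-- Conjugation by `g : L` as a homomorphism `R →* R`. -/
def conjHomR (g : L) : R →* R where
  toFun r := ⟨g * r * g⁻¹, ‹R.Normal›.conj_mem r.1 r.2 g⟩
  map_one' := by ext; simp
  map_mul' r s := by ext; simp [mul_assoc]

/-- The induced map on `R ⧸ (U.subgroupOf R)`. -/
def conjQ (g : L) : (R ⧸ U.subgroupOf R) →* (R ⧸ U.subgroupOf R) :=
  QuotientGroup.map _ _ (conjHomR R g) (by
    intro r hr
    simp only [Subgroup.mem_comap, Subgroup.mem_subgroupOf, conjHomR] at hr ⊢
    exact ‹U.Normal›.conj_mem _ hr g)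

@[simp] lemma conjQ_mk (g : L) (r : R) :
    conjQ R U g (QuotientGroup.mk r) = QuotientGroup.mk (conjHomR R g r) := rfl

/-- Conjugation by `g` as an automorphism of `R ⧸ (U.subgroupOf R)`. -/
def conjAutQ (g : L) : MulAut (R ⧸ U.subgroupOf R) where
  toFun := conjQ R U g
  invFun := conjQ R U g⁻¹
  left_inv := by
    intro x
    induction x using QuotientGroup.induction_on with
    | H r => simp only [conjQ_mk]; congr 1; ext; simp [conjHomR]; group
  right_inv := by
    intro x
    induction x using QuotientGroup.induction_on with
    | H r => simp only [conjQ_mk]; congr 1; ext; simp [conjHomR]; group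
  map_mul' := (conjQ R U g).map_mul

/-- The action of `L` on `R ⧸ (U.subgroupOf R)` by conjugation, as a homomorphism. -/
def conjActionHom : L →* MulAut (R ⧸ U.subgroupOf R) where
  toFun := conjAutQ R U
  map_one' := by
    ext x
    induction x using QuotientGroup.induction_on with
    | H r => simp only [conjAutQ, MulEquiv.coe_mk, Equiv.coe_fn_mk, conjQ_mk,
        MulAut.one_apply]; congr 1; ext; simp [conjHomR]
  map_mul' g h := by
    ext x
    induction x using QuotientGroup.induction_on with
    | H r =>
      simp only [conjAutQ, MulEquiv.coe_mk, Equiv.coe_fn_mk, MulAut.mul_apply, conjQ_mk]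
      congr 1; ext; simp [conjHomR]; group

end Aux

/-- Let `R ◁ L`, and `U ◁ L` with `U ≤ R` of finite index in `R`.  Then
`⁅U^L, R⁆ ≤ U`, where `U^L` is the closure of `U` in the profinite topology of `L`;
that is, `U^L` acts trivially on `R/U` by conjugation. -/
theorem commutator_profClosure_le {L : Type} [Group L] (R U : Subgroup L)
    [R.Normal] [U.Normal] (hUR : U ≤ R) (hfin : (U.subgroupOf R).FiniteIndex) :
    ⁅profClosure U, R⁆ ≤ U := by
  haveI := hfin
  haveI : Finite (R ⧸ U.subgroupOf R) := Subgroup.finite_quotient_of_finiteIndex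
  haveI : Finite (MulAut (R ⧸ U.subgroupOf R)) :=
    Finite.of_injective (fun e => (e : (R ⧸ U.subgroupOf R) → (R ⧸ U.subgroupOf R)))
      (fun a b h => by ext x; exact congrFun h x)
  set φ := conjActionHom R U with hφ
  have hKfin : φ.ker.FiniteIndex := Subgroup.finiteIndex_ker φ
  -- U ≤ ker φ
  have hUK : U ≤ φ.ker := by
    intro u hu
    rw [MonoidHom.mem_ker]
    ext x
    induction x using QuotientGroup.induction_on with
    | H r =>
      show (conjAutQ R U u) _ = _
      simp only [conjAutQ, MulEquiv.coe_mk, Equiv.coe_fn_mk, conjQ_mk, MulAut.one_apply]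
      rw [QuotientGroup.eq]
      simp only [Subgroup.mem_subgroupOf, conjHomR, MonoidHom.coe_mk, OneHom.coe_mk,
        MulMemClass.mk_mul_mk, InvMemClass.coe_inv, Subgroup.coe_mul]
      show ((u * r * u⁻¹ : L))⁻¹ * r ∈ U
      have h1 : ((u * r * u⁻¹ : L))⁻¹ * r = u * ((r : L)⁻¹ * u⁻¹ * r) := by group
      rw [h1]
      exact U.mul_mem hu (by simpa using ‹U.Normal›.conj_mem _ (U.inv_mem hu) (r : L)⁻¹)
  have hclos : profClosure U ≤ φ.ker := by
    refine le_trans ?_ (le_refl _)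
    exact iInf₂_le φ.ker ⟨hKfin, hUK⟩
  rw [Subgroup.commutator_le]
  intro g hg r hr
  have hgK : g ∈ φ.ker := hclos hg
  rw [MonoidHom.mem_ker] at hgK
  have := congrArg (fun (e : MulAut (R ⧸ U.subgroupOf R)) => e (QuotientGroup.mk ⟨r, hr⟩)) hgK
  simp only [MulAut.one_apply] at this
  have h2 : (conjAutQ R U g) (QuotientGroup.mk ⟨r, hr⟩) = QuotientGroup.mk ⟨r, hr⟩ := this
  simp only [conjAutQ, MulEquiv.coe_mk, Equiv.coe_fn_mk, conjQ_mk] at h2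
  rw [QuotientGroup.eq] at h2
  simp only [Subgroup.mem_subgroupOf, conjHomR, MonoidHom.coe_mk, OneHom.coe_mk] at h2
  have h3 : ((g * r * g⁻¹ : L))⁻¹ * r ∈ U := h2
  have h4 : (open scoped commutatorElement in ⁅g, r⁆) = r * (((g * r * g⁻¹)⁻¹ * r))⁻¹ * r⁻¹ := by
    rw [commutatorElement_def]; group
  rw [h4]
  simpa using ‹U.Normal›.conj_mem _ (U.inv_mem h3) r
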